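/- Upper bound of the compatibility factor by the CIF: with the cone C_a and the quantities K_a, ζ_{a,∞} defined below, one has K_a ≤ 2(1+a)·|T|·ζ_{a,∞}/(1−a)²; moreover, every θ ∈ C_a satisfies |θ|_∞ ≤ ((1+a)/(1−a))·|θ_T|₁ and |θ|₁ ≤ (2/(1−a))·|θ_T|₁. -/

import Mathlib

open scoped BigOperators

/-- The ℓ∞ norm of a vector. -/
noncomputable def linf {p : ℕ} (v : Fin p → ℝ) : ℝ := ⨆ j, |v j|

/-- The cone C_a = {θ : |θ_{T'}|₁ ≤ ((1+a)/(1−a)) |θ_T|₁}. -/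
def coneT {p : ℕ} (T : Finset (Fin p)) (a : ℝ) : Set (Fin p → ℝ) :=
  {θ | ∑ j ∈ Tᶜ, |θ j| ≤ (1 + a) / (1 - a) * ∑ j ∈ T, |θ j|}

/-- The quadratic form θᵀXᵀXθ = ‖Xθ‖₂². -/
noncomputable def quadF {n p : ℕ} (X : Matrix (Fin n) (Fin p) ℝ) (θ : Fin p → ℝ) : ℝ :=
  ∑ i, (X.mulVec θ i) ^ 2

/-- The restricted eigenvalue RE_a. -/
noncomputable def REa {n p : ℕ} (X : Matrix (Fin n) (Fin p) ℝ) (T : Finset (Fin p))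
    (a : ℝ) : ℝ :=
  sInf ((fun θ => quadF X θ / ∑ j, θ j ^ 2) '' (coneT T a ∩ {θ | θ ≠ 0}))

/-- The compatibility factor K_a. -/
noncomputable def Ka {n p : ℕ} (X : Matrix (Fin n) (Fin p) ℝ) (T : Finset (Fin p))
    (a : ℝ) : ℝ :=
  sInf ((fun θ => (T.card : ℝ) * quadF X θ / (∑ j ∈ T, |θ j|) ^ 2) ''
    (coneT T a ∩ {θ | θ ≠ 0}))

/-- The cone invertibility factor ζ_{a,2}. -/
noncomputable def zeta2 {n p : ℕ} (X : Matrix (Fin n) (Fin p) ℝ) (T : Finset (Fin p))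
    (a : ℝ) : ℝ :=
  sInf ((fun θ => Real.sqrt (T.card : ℝ) * linf (X.transpose.mulVec (X.mulVec θ)) /
      Real.sqrt (∑ j, θ j ^ 2)) '' (coneT T a ∩ {θ | θ ≠ 0}))

/-- The cone invertibility factor ζ_{a,∞}. -/
noncomputable def zetaInf {n p : ℕ} (X : Matrix (Fin n) (Fin p) ℝ) (T : Finset (Fin p))
    (a : ℝ) : ℝ :=
  sInf ((fun θ => linf (X.transpose.mulVec (X.mulVec θ)) / linf θ) ''
    (coneT T a ∩ {θ | θ ≠ 0}))

lemma abs_le_linf' {p : ℕ} (v : Fin p → ℝ) (j : Fin p) : |v j| ≤ linf v :=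
  by unfold linf; exact le_ciSup (f := fun j => |v j|) (Set.Finite.bddAbove (Set.finite_range _)) j

lemma quadF_nonneg {n p : ℕ} (X : Matrix (Fin n) (Fin p) ℝ) (θ : Fin p → ℝ) :
    0 ≤ quadF X θ := Finset.sum_nonneg fun i _ => sq_nonneg _

lemma quadF_eq_dot {n p : ℕ} (X : Matrix (Fin n) (Fin p) ℝ) (θ : Fin p → ℝ) :
    quadF X θ = ∑ j, θ j * (X.transpose.mulVec (X.mulVec θ)) j := by
  have h : ∑ j, θ j * (X.transpose.mulVec (X.mulVec θ)) j
      = dotProduct θ (X.transpose.mulVec (X.mulVec θ)) := rfl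
  rw [h, Matrix.dotProduct_mulVec, Matrix.vecMul_transpose]
  simp [quadF, dotProduct, sq]

/-- Upper bound of the compatibility factor by the CIF:
K_a ≤ 2(1+a)|T| ζ_{a,∞}/(1−a)²; moreover every θ ∈ C_a satisfies
|θ|_∞ ≤ ((1+a)/(1−a)) |θ_T|₁ and |θ|₁ ≤ (2/(1−a)) |θ_T|₁. -/
theorem stmt18 {n p : ℕ} (hn : 0 < n) (hp : 0 < p)
    (X : Matrix (Fin n) (Fin p) ℝ)
    (T : Finset (Fin p)) (hT : T.Nonempty)
    (a : ℝ) (ha : a ∈ Set.Ioo (0 : ℝ) 1) :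
    Ka X T a ≤ 2 * (1 + a) * (T.card : ℝ) * zetaInf X T a / (1 - a) ^ 2 ∧
    ∀ θ ∈ coneT T a,
      linf θ ≤ (1 + a) / (1 - a) * ∑ j ∈ T, |θ j| ∧
      ∑ j, |θ j| ≤ 2 / (1 - a) * ∑ j ∈ T, |θ j| := by
  haveI : Nonempty (Fin p) := ⟨⟨0, hp⟩⟩
  obtain ⟨ha0, ha1⟩ := ha
  have h1a : (0:ℝ) < 1 - a := by linarith
  have hcoef : (1:ℝ) ≤ (1 + a) / (1 - a) := by
    rw [le_div_iff₀ h1a]; linarith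
  have hcoef0 : (0:ℝ) ≤ (1 + a) / (1 - a) := le_trans zero_le_one hcoef
  have hpart2 : ∀ θ ∈ coneT T a,
      linf θ ≤ (1 + a) / (1 - a) * ∑ j ∈ T, |θ j| ∧
      ∑ j, |θ j| ≤ 2 / (1 - a) * ∑ j ∈ T, |θ j| := by
    intro θ hθ
    have hS : (0:ℝ) ≤ ∑ j ∈ T, |θ j| := Finset.sum_nonneg fun j _ => abs_nonneg _
    have hθ' : ∑ j ∈ Tᶜ, |θ j| ≤ (1 + a) / (1 - a) * ∑ j ∈ T, |θ j| := hθ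
    have hlinf : linf θ ≤ (1 + a) / (1 - a) * ∑ j ∈ T, |θ j| := by
      refine ciSup_le fun j => ?_
      by_cases hj : j ∈ T
      · calc |θ j| ≤ ∑ j ∈ T, |θ j| :=
            Finset.single_le_sum (f := fun i => |θ i|) (fun i _ => abs_nonneg _) hj
          _ ≤ (1 + a) / (1 - a) * ∑ j ∈ T, |θ j| := le_mul_of_one_le_left hS hcoef
      · calc |θ j| ≤ ∑ j ∈ Tᶜ, |θ j| :=
            Finset.single_le_sum (f := fun i => |θ i|) (fun i _ => abs_nonneg _) (Finset.mem_compl.mpr hj)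
          _ ≤ _ := hθ'
    refine ⟨hlinf, ?_⟩
    have hsplit : ∑ j, |θ j| = ∑ j ∈ T, |θ j| + ∑ j ∈ Tᶜ, |θ j| :=
      (Finset.sum_add_sum_compl T _).symm
    have heq : (1:ℝ) + (1 + a) / (1 - a) = 2 / (1 - a) := by
      field_simp; norm_num
    calc ∑ j, |θ j| = ∑ j ∈ T, |θ j| + ∑ j ∈ Tᶜ, |θ j| := hsplit
      _ ≤ ∑ j ∈ T, |θ j| + (1 + a)/(1 - a) * ∑ j ∈ T, |θ j| := by linarith
      _ = (1 + (1 + a)/(1 - a)) * ∑ j ∈ T, |θ j| := by ring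
      _ = 2/(1-a) * ∑ j ∈ T, |θ j| := by rw [heq]
  refine ⟨?_, hpart2⟩
  set c : ℝ := 2 * (1 + a) * (T.card : ℝ) / (1 - a)^2 with hc
  have hcard : (0:ℝ) < (T.card : ℝ) := by exact_mod_cast hT.card_pos
  have hc0 : 0 < c := by
    apply div_pos; · nlinarith
    · positivity
  have hgoal_eq : 2 * (1 + a) * (T.card : ℝ) * zetaInf X T a / (1 - a) ^ 2
      = c * zetaInf X T a := by rw [hc]; ring
  rw [hgoal_eq]
  -- nonempty witness for the cone
  obtain ⟨j0, hj0⟩ := hT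
  set θ0 : Fin p → ℝ := fun j => if j = j0 then 1 else 0 with hθ0
  have hθ0cone : θ0 ∈ coneT T a := by
    have h1 : ∑ j ∈ Tᶜ, |θ0 j| = 0 := by
      apply Finset.sum_eq_zero
      intro j hj
      have : j ≠ j0 := fun h => (Finset.mem_compl.mp hj) (h ▸ hj0)
      simp [hθ0, this]
    have h2 : (0:ℝ) ≤ (1 + a) / (1 - a) * ∑ j ∈ T, |θ0 j| :=
      mul_nonneg hcoef0 (Finset.sum_nonneg fun j _ => abs_nonneg _)
    simpa [coneT, h1] using h2
  have hθ0ne : θ0 ≠ 0 := by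
    intro h
    have : θ0 j0 = 0 := congrFun h j0
    simp [hθ0] at this
  have hZne : ((fun θ => linf (X.transpose.mulVec (X.mulVec θ)) / linf θ) ''
      (coneT T a ∩ {θ | θ ≠ 0})).Nonempty := ⟨_, ⟨θ0, ⟨hθ0cone, hθ0ne⟩, rfl⟩⟩
  have hKbdd : BddBelow ((fun θ => (T.card : ℝ) * quadF X θ / (∑ j ∈ T, |θ j|) ^ 2) ''
      (coneT T a ∩ {θ | θ ≠ 0})) := by
    refine ⟨0, fun x hx => ?_⟩
    obtain ⟨θ, _, rfl⟩ := hx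
    exact div_nonneg (mul_nonneg (Nat.cast_nonneg _) (quadF_nonneg X θ)) (sq_nonneg _)
  rw [← div_le_iff₀' hc0]
  refine le_csInf hZne ?_
  rintro z ⟨θ, ⟨hθc, hθne⟩, rfl⟩
  rw [div_le_iff₀' hc0]
  -- positivity facts for θ
  set S : ℝ := ∑ j ∈ T, |θ j| with hSdef
  have hS0 : 0 ≤ S := Finset.sum_nonneg fun j _ => abs_nonneg _
  have hSpos : 0 < S := by
    rcases hS0.lt_or_eq with h | h
    · exact h
    · exfalso
      apply hθne
      have hTz : ∀ j ∈ T, |θ j| = 0 := by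
        intro j hj
        have := (Finset.sum_eq_zero_iff_of_nonneg (fun i _ => abs_nonneg (θ i))).mp h.symm
        exact this j hj
      have hθc' : ∑ j ∈ Tᶜ, |θ j| ≤ (1 + a) / (1 - a) * S := hθc
      have hcompl : ∑ j ∈ Tᶜ, |θ j| = 0 := by
        have h1 : ∑ j ∈ Tᶜ, |θ j| ≤ 0 := by
          rw [← h] at hθc'; simpa using hθc'
        have h2 : 0 ≤ ∑ j ∈ Tᶜ, |θ j| := Finset.sum_nonneg fun j _ => abs_nonneg _
        linarith
      have hTcz : ∀ j ∈ Tᶜ, |θ j| = 0 :=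
        (Finset.sum_eq_zero_iff_of_nonneg (fun i _ => abs_nonneg (θ i))).mp hcompl
      funext j
      by_cases hj : j ∈ T
      · exact abs_eq_zero.mp (hTz j hj)
      · exact abs_eq_zero.mp (hTcz j (Finset.mem_compl.mpr hj))
  obtain ⟨j1, hj1⟩ := Function.ne_iff.mp hθne
  set L : ℝ := linf θ with hLdef
  have hLpos : 0 < L := lt_of_lt_of_le (abs_pos.mpr hj1) (abs_le_linf' θ j1)
  set M : ℝ := linf (X.transpose.mulVec (X.mulVec θ)) with hMdef
  have hM0 : 0 ≤ M := le_trans (abs_nonneg _) (abs_le_linf' _ j1)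
  have hquad : quadF X θ ≤ (∑ j, |θ j|) * M := by
    rw [quadF_eq_dot]
    calc ∑ j, θ j * (X.transpose.mulVec (X.mulVec θ)) j
        ≤ ∑ j, |θ j| * |(X.transpose.mulVec (X.mulVec θ)) j| := by
          refine Finset.sum_le_sum fun j _ => ?_
          rw [← abs_mul]; exact le_abs_self _
      _ ≤ ∑ j, |θ j| * M :=
          Finset.sum_le_sum fun j _ =>
            mul_le_mul_of_nonneg_left (abs_le_linf' _ j) (abs_nonneg _)
      _ = (∑ j, |θ j|) * M := (Finset.sum_mul _ _ _).symm
  obtain ⟨hinf, hl1⟩ := hpart2 θ hθc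
  have hquad2 : quadF X θ ≤ 2/(1-a) * S * M := by
    calc quadF X θ ≤ (∑ j, |θ j|) * M := hquad
      _ ≤ (2/(1-a) * S) * M := mul_le_mul_of_nonneg_right hl1 hM0
      _ = 2/(1-a) * S * M := by ring
  -- goal: (T.card) * quadF X θ / S^2 ≤ c * (M / L)
  have hKle : (T.card : ℝ) * quadF X θ / S ^ 2 ≤ c * (M / L) := by
    rw [mul_div_assoc' c M L, div_le_div_iff₀ (pow_pos hSpos 2) hLpos]
    have hmul : quadF X θ * L ≤ (2/(1-a) * S * M) * ((1 + a)/(1 - a) * S) :=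
      mul_le_mul hquad2 hinf hLpos.le
        (by positivity)
    calc (T.card : ℝ) * quadF X θ * L = (T.card : ℝ) * (quadF X θ * L) := by ring
      _ ≤ (T.card : ℝ) * ((2/(1-a) * S * M) * ((1 + a)/(1 - a) * S)) :=
          mul_le_mul_of_nonneg_left hmul (Nat.cast_nonneg _)
      _ = c * M * S ^ 2 := by rw [hc]; field_simp
  refine le_trans ?_ hKle
  exact csInf_le hKbdd ⟨θ, ⟨hθc, hθne⟩, rfl⟩
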